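/- arXiv:1806.02275 — 2 statements merged into one kernel-verified Lean document; each statement's English description precedes it below -/
import Mathlib

section
/- Let d ≥ 4 and let s be an integer with 3 ≤ s < (-3 + √(8d+41))/2. Then τ(d,s)_max < τ^N(d,s-1)_min, where τ(d,s)_max = (d-1)(d-s-1) + s² and τ^N(d,t)_min = (d-1)(d-t-1) + C(t,2) + 4. -/
/-- For `d ≥ 4` and `3 ≤ s < (-3 + √(8d+41))/2`, one has
`τ(d,s)_max < τ^N(d,s-1)_min`, where `τ(d,t)_max = (d-1)(d-t-1) + t²` and
`τ^N(d,t)_min = (d-1)(d-t-1) + C(t,2) + 4`. -/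
theorem interval_disjointness (d s : ℤ) (hd : 4 ≤ d) (hs : 3 ≤ s)
    (hsd : (s : ℝ) < (-3 + Real.sqrt (8 * d + 41)) / 2) :
    (d - 1) * (d - s - 1) + s ^ 2 <
      (d - 1) * (d - (s - 1) - 1) + (s - 1) * (s - 2) / 2 + 4 := by
  have h1 : ((2 * s + 3 : ℤ) : ℝ) < Real.sqrt (8 * d + 41) := by push_cast; linarith
  have h2 : ((2 * s + 3 : ℤ) : ℝ) ^ 2 < ((8 * d + 41 : ℤ) : ℝ) := by
    have h0 : (0 : ℝ) ≤ ((2 * s + 3 : ℤ) : ℝ) := by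
      have : (3 : ℝ) ≤ (s : ℝ) := by exact_mod_cast hs
      push_cast; linarith
    have := (Real.lt_sqrt h0).mp (by push_cast at h1 ⊢; convert h1 using 2 <;> push_cast <;> ring)
    push_cast at this ⊢; linarith
  have h3 : (2 * s + 3) ^ 2 < 8 * d + 41 := by exact_mod_cast h2
  have key : s ^ 2 + 3 * s < 2 * d + 8 := by nlinarith
  have hdvd : (s - 1) * (s - 2) / 2 * 2 = (s - 1) * (s - 2) := by
    apply Int.ediv_mul_cancel
    rcases Int.even_or_odd s with ⟨k, hk⟩ | ⟨k, hk⟩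
    · exact ⟨(s-1)*k - (s-1), by rw [hk]; ring⟩
    · exact ⟨k*(s-2), by rw [hk]; ring⟩
  nlinarith [hdvd, key]
end

section
/- Let h, h̃ be nonzero homogeneous polynomials in ℂ[x,y,z] and A a homogeneous polynomial. If the triples ρ_q = (x·h̃_y, y·h̃_y - d·h̃, z·h̃_y) and ρ_p = (x·h_x - d·h, y·h_x, z·h_x) satisfy ρ_q = A·ρ_p componentwise (with d > 0), then a contradiction arises; i.e., ρ_q is never a polynomial multiple of ρ_p. -/
open MvPolynomial

/-- Lemma 2.2: for nonzero (homogeneous) `h, h̃` in `ℂ[x,y,z]` and `d > 0`, the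
syzygy `ρ_q = (x·h̃_y, y·h̃_y - d·h̃, z·h̃_y)` is never a polynomial multiple
`A·ρ_p` of `ρ_p = (x·h_x - d·h, y·h_x, z·h_x)`. -/
theorem rho_q_not_multiple_of_rho_p (d : ℕ) (hd : 0 < d)
    (h ht A : MvPolynomial (Fin 3) ℂ) (hh : h ≠ 0) (hht : ht ≠ 0)
    (hhhom : ∃ k, h.IsHomogeneous k) (hthom : ∃ k, ht.IsHomogeneous k)
    (hAhom : ∃ k, A.IsHomogeneous k)
    (h1 : X 0 * pderiv 1 ht = A * (X 0 * pderiv 0 h - (d : ℂ) • h))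
    (h2 : X 1 * pderiv 1 ht - (d : ℂ) • ht = A * (X 1 * pderiv 0 h))
    (h3 : X 2 * pderiv 1 ht = A * (X 2 * pderiv 0 h)) :
    False := by
  have hX2 : (X 2 : MvPolynomial (Fin 3) ℂ) ≠ 0 := X_ne_zero 2
  have hdC : (C (d : ℂ) : MvPolynomial (Fin 3) ℂ) ≠ 0 := by
    simp [Nat.cast_ne_zero, hd.ne']
  have key : pderiv 1 ht = A * pderiv 0 h := by
    apply mul_left_cancel₀ hX2
    rw [h3]; ring
  rw [key, smul_eq_C_mul] at h1 h2
  have hA : A = 0 := by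
    have hz : C (d : ℂ) * (A * h) = 0 := by linear_combination h1
    rcases mul_eq_zero.mp hz with h' | h'
    · exact absurd h' hdC
    · rcases mul_eq_zero.mp h' with h'' | h'' <;> [exact h''; exact absurd h'' hh]
  rw [hA] at h2
  have hz : C (d : ℂ) * ht = 0 := by linear_combination -h2
  rcases mul_eq_zero.mp hz with h' | h' <;> [exact hdC h'; exact hht h']
end
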